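/- Let n ≥ 3 and σ₂ > 1, and let d be the probability vector on Fin n with d 0 = 1/σ₂ and d i = (σ₂ − 1)/(σ₂ (n − 1)) for i ≠ 0. Let p be a probability vector of the form p 0 = 1/σ₂, p 1 = y, and p i = (1 − 1/σ₂ − y)/(n − 2) for all i ≥ 2. If D₂(p‖d) = σ₂, then y = (σ₂ − 1)/(σ₂ (n − 1)) + (σ₂ − 1)√(n − 2)/(√σ₂ · (n − 1)) or y = (σ₂ − 1)/(σ₂ (n − 1)) − (σ₂ − 1)√(n − 2)/(√σ₂ · (n − 1)). -/

import Mathlib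

/-- Let `n ≥ 3`, `σ₂ > 1`, `d 0 = 1/σ₂` and `d i = (σ₂−1)/(σ₂(n−1))` for `i ≠ 0`.
If `p` is a probability vector with `p 0 = 1/σ₂`, `p 1 = y`, and
`p i = (1 − 1/σ₂ − y)/(n−2)` for `i ≥ 2`, and `D₂(p‖d) = σ₂`, then
`y = (σ₂−1)/(σ₂(n−1)) ± (σ₂−1)√(n−2)/(√σ₂·(n−1))`. -/
theorem renyi2_fixed_first_solutions (n : ℕ) (hn : 3 ≤ n)
    (σ₂ y : ℝ) (hσ : 1 < σ₂)
    (d : Fin n → ℝ)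
    (hd0 : ∀ i : Fin n, (i : ℕ) = 0 → d i = 1 / σ₂)
    (hdi : ∀ i : Fin n, (i : ℕ) ≠ 0 → d i = (σ₂ - 1) / (σ₂ * ((n : ℝ) - 1)))
    (p : Fin n → ℝ) (hp_nonneg : ∀ i, 0 ≤ p i) (hp_sum : ∑ i, p i = 1)
    (hp0 : ∀ i : Fin n, (i : ℕ) = 0 → p i = 1 / σ₂)
    (hp1 : ∀ i : Fin n, (i : ℕ) = 1 → p i = y)
    (hpi : ∀ i : Fin n, 2 ≤ (i : ℕ) → p i = (1 - 1 / σ₂ - y) / ((n : ℝ) - 2))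
    (hD2 : ∑ i, (p i) ^ 2 / d i = σ₂) :
    y = (σ₂ - 1) / (σ₂ * ((n : ℝ) - 1))
          + (σ₂ - 1) * Real.sqrt ((n : ℝ) - 2) / (Real.sqrt σ₂ * ((n : ℝ) - 1)) ∨
    y = (σ₂ - 1) / (σ₂ * ((n : ℝ) - 1))
          - (σ₂ - 1) * Real.sqrt ((n : ℝ) - 2) / (Real.sqrt σ₂ * ((n : ℝ) - 1)) := by
  obtain ⟨m, rfl⟩ : ∃ m, n = m + 3 := ⟨n - 3, by omega⟩
  have hσ0 : (0:ℝ) < σ₂ := by linarith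
  have hN : ((m + 3 : ℕ) : ℝ) = (m : ℝ) + 3 := by push_cast; ring
  have hs2 : Real.sqrt σ₂ ^ 2 = σ₂ := Real.sq_sqrt hσ0.le
  have hspos : 0 < Real.sqrt σ₂ := Real.sqrt_pos.mpr hσ0
  have ht2 : Real.sqrt (((m + 3 : ℕ) : ℝ) - 2) ^ 2 = (m : ℝ) + 1 := by
    rw [hN]
    have : (m : ℝ) + 3 - 2 = (m : ℝ) + 1 := by ring
    rw [this]
    exact Real.sq_sqrt (by positivity)
  -- compute the divergence sum
  rw [Fin.sum_univ_succ, Fin.sum_univ_succ] at hD2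
  have htail : ∀ i : Fin (m + 1),
      p i.succ.succ ^ 2 / d i.succ.succ
        = ((1 - 1/σ₂ - y) / (((m+3:ℕ):ℝ) - 2)) ^ 2
            / ((σ₂ - 1) / (σ₂ * (((m+3:ℕ):ℝ) - 1))) := by
    intro i
    rw [hpi _ (by simp), hdi _ (by simp)]
  rw [hp0 0 rfl, hd0 0 rfl, hp1 _ rfl, hdi _ (by simp)] at hD2
  simp only [htail, Finset.sum_const, Finset.card_univ, Fintype.card_fin,
    nsmul_eq_mul] at hD2
  rw [hN] at hD2 ⊢
  push_cast at hD2
  -- abbreviations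
  set M : ℝ := (m : ℝ) with hM
  have hσ1 : σ₂ - 1 ≠ 0 := by linarith
  have hM2 : M + 2 ≠ 0 := by positivity
  have hM1 : M + 1 ≠ 0 := by positivity
  have hM1' : (m:ℝ) + 3 - 2 = M + 1 := by rw [hM]; ring
  have hM2' : (m:ℝ) + 3 - 1 = M + 2 := by rw [hM]; ring
  rw [hM1', hM2'] at hD2 ⊢
  have hσne : σ₂ ≠ 0 := ne_of_gt hσ0
  -- key quadratic identity
  have hyc' : (y * σ₂ * (M + 2) - (σ₂ - 1)) ^ 2 = (σ₂ - 1) ^ 2 * (M + 1) * σ₂ := by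
    field_simp at hD2
    have hkey : (σ₂ ^ 3 * (σ₂ - 1) * (M + 1))
        * ((y * σ₂ * (M + 2) - (σ₂ - 1)) ^ 2 - (σ₂ - 1) ^ 2 * (M + 1) * σ₂) = 0 := by
      linear_combination (σ₂ ^ 3 * (σ₂ - 1) * (M + 1)) * hD2
    have hk : σ₂ ^ 3 * (σ₂ - 1) * (M + 1) ≠ 0 :=
      mul_ne_zero (mul_ne_zero (pow_ne_zero _ hσne) hσ1) hM1
    have := (mul_eq_zero.mp hkey).resolve_left hk
    linarith
  have hyc : (y - (σ₂ - 1) / (σ₂ * (M + 2))) ^ 2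
      = (σ₂ - 1) ^ 2 * (M + 1) / (σ₂ * (M + 2) ^ 2) := by
    field_simp
    linear_combination hyc'
  have hb2 : ((σ₂ - 1) * Real.sqrt (M + 1) / (Real.sqrt σ₂ * (M + 2))) ^ 2
      = (σ₂ - 1) ^ 2 * (M + 1) / (σ₂ * (M + 2) ^ 2) := by
    have ht2' : Real.sqrt (M + 1) ^ 2 = M + 1 := by
      have : (0:ℝ) ≤ M + 1 := by positivity
      exact Real.sq_sqrt this
    field_simp
    rw [ht2', hs2]; ring
  have hfac : (y - (σ₂ - 1) / (σ₂ * (M + 2))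
        - (σ₂ - 1) * Real.sqrt (M + 1) / (Real.sqrt σ₂ * (M + 2)))
      * (y - (σ₂ - 1) / (σ₂ * (M + 2))
        + (σ₂ - 1) * Real.sqrt (M + 1) / (Real.sqrt σ₂ * (M + 2))) = 0 := by
    linear_combination hyc - hb2
  rcases mul_eq_zero.mp hfac with h | h
  · left; linarith
  · right; linarith
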